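/- Let f(q₂,q₃,q₄) = cos(q₂) + cos(q₃) + cos(q₄) + cos(q₂+q₃) + cos(q₃+q₄) on 𝕋³. Then the set of critical points of f consists exactly of: the four isolated points (0,0,0), (0,0,π), (π,0,0), (π,0,π), and the two one-parameter families P₁(ϑ) = (ϑ, π, ϑ-π) and P₂(ϑ) = (ϑ, π, -ϑ), ϑ ∈ 𝕋. -/

import Mathlib

set_option maxHeartbeats 1000000

open Real

/-- Equality of angles on the circle `ℝ/2πℤ`. -/
def AngleEq (x y : ℝ) : Prop := ∃ k : ℤ, x = y + 2 * π * k

private lemma key_sum (x y : ℝ) :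
    sin x + sin (x + y) = 2 * sin (x + y / 2) * cos (y / 2) := by
  have s1 := Real.sin_add (x + y / 2) (y / 2)
  have s2 := Real.sin_sub (x + y / 2) (y / 2)
  rw [show x + y / 2 + y / 2 = x + y by ring] at s1
  rw [show x + y / 2 - y / 2 = x by ring] at s2
  rw [s1, s2]; ring

private lemma sin2pi (k : ℤ) : sin (2 * π * k) = 0 := by
  rw [show 2 * π * (k : ℝ) = ((2 * k : ℤ) : ℝ) * π by push_cast; ring]
  exact Real.sin_int_mul_pi _

private lemma cos2pi (k : ℤ) : cos (2 * π * k) = 1 := by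
  have := Real.cos_int_mul_two_pi k
  rw [show (k : ℝ) * (2 * π) = 2 * π * k by ring] at this
  exact this

private lemma crit_iff (q₂ q₃ q₄ : ℝ) :
    (sin q₂ + sin (q₂ + q₃) = 0 ∧
     sin q₃ + sin (q₂ + q₃) + sin (q₃ + q₄) = 0 ∧
     sin q₄ + sin (q₃ + q₄) = 0) ↔
    ((AngleEq q₂ 0 ∧ AngleEq q₃ 0 ∧ AngleEq q₄ 0) ∨
     (AngleEq q₂ 0 ∧ AngleEq q₃ 0 ∧ AngleEq q₄ π) ∨
     (AngleEq q₂ π ∧ AngleEq q₃ 0 ∧ AngleEq q₄ 0) ∨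
     (AngleEq q₂ π ∧ AngleEq q₃ 0 ∧ AngleEq q₄ π) ∨
     (AngleEq q₃ π ∧ AngleEq q₄ (q₂ - π)) ∨
     (AngleEq q₃ π ∧ AngleEq q₄ (-q₂))) := by
  constructor
  · rintro ⟨E1, E2, E3⟩
    have h1 : sin (q₂ + q₃ / 2) * cos (q₃ / 2) = 0 := by
      have h := key_sum q₂ q₃; linear_combination (E1 - h) / 2
    have h3 : sin (q₄ + q₃ / 2) * cos (q₃ / 2) = 0 := by
      have := key_sum q₄ q₃
      rw [show q₄ + q₃ = q₃ + q₄ by ring] at this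
      linear_combination (E3 - this) / 2
    by_cases hB : cos (q₃ / 2) = 0
    · -- family case: q₃ ≡ π
      obtain ⟨k, hk⟩ := Real.cos_eq_zero_iff.mp hB
      have hq3 : q₃ = π + 2 * π * k := by
        rw [show q₃ = 2 * (q₃ / 2) by ring, hk]; ring
      have hs3 : sin q₃ = 0 := by
        rw [hq3, Real.sin_add, sin2pi, cos2pi, Real.sin_pi]; ring
      have hs23 : sin (q₂ + q₃) = -sin q₂ := by
        rw [hq3, show q₂ + (π + 2 * π * (k : ℝ)) = q₂ + π + 2 * π * (k : ℝ) by ring,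
          Real.sin_add, sin2pi, cos2pi, Real.sin_add_pi]; ring
      have hs34 : sin (q₃ + q₄) = -sin q₄ := by
        rw [hq3, show π + 2 * π * (k : ℝ) + q₄ = q₄ + π + 2 * π * (k : ℝ) by ring,
          Real.sin_add, sin2pi, cos2pi, Real.sin_add_pi]; ring
      have E24 : sin q₂ + sin q₄ = 0 := by
        rw [hs3, hs23, hs34] at E2; linarith
      have h24 : sin (q₂ + (q₄ - q₂) / 2) * cos ((q₄ - q₂) / 2) = 0 := by
        have := key_sum q₂ (q₄ - q₂)
        rw [show q₂ + (q₄ - q₂) = q₄ by ring] at this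
        linear_combination (E24 - this) / 2
      rcases mul_eq_zero.mp h24 with hx | hx
      · obtain ⟨n, hn⟩ := Real.sin_eq_zero_iff.mp hx
        refine Or.inr (Or.inr (Or.inr (Or.inr (Or.inr ⟨⟨k, hq3⟩, ⟨n, ?_⟩⟩))))
        linarith
      · obtain ⟨n, hn⟩ := Real.cos_eq_zero_iff.mp hx
        refine Or.inr (Or.inr (Or.inr (Or.inr (Or.inl ⟨⟨k, hq3⟩, ⟨n + 1, ?_⟩⟩))))
        push_cast
        nlinarith [hn]
    · -- isolated case
      have hA1 : sin (q₂ + q₃ / 2) = 0 := (mul_eq_zero.mp h1).resolve_right hB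
      have hA3 : sin (q₄ + q₃ / 2) = 0 := (mul_eq_zero.mp h3).resolve_right hB
      obtain ⟨m, hm⟩ := Real.sin_eq_zero_iff.mp hA1
      obtain ⟨n, hn⟩ := Real.sin_eq_zero_iff.mp hA3
      set s := sin (q₃ / 2) with hs_def
      set t := cos (q₃ / 2) with ht_def
      set u := cos ((m : ℝ) * π) with hu_def
      set v := cos ((n : ℝ) * π) with hv_def
      have hsin3 : sin q₃ = 2 * s * t := by
        rw [hs_def, ht_def, ← Real.sin_two_mul]; ring_nf
      have hsin23 : sin (q₂ + q₃) = u * s := by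
        have e : q₂ + q₃ = (m : ℝ) * π + q₃ / 2 := by linarith
        rw [hs_def, hu_def, e, Real.sin_add, Real.sin_int_mul_pi]; ring
      have hsin34 : sin (q₃ + q₄) = v * s := by
        have e : q₃ + q₄ = (n : ℝ) * π + q₃ / 2 := by linarith
        rw [hs_def, hv_def, e, Real.sin_add, Real.sin_int_mul_pi]; ring
      have hu : u ^ 2 = 1 := by
        have h := Real.sin_sq_add_cos_sq ((m : ℝ) * π)
        rw [Real.sin_int_mul_pi] at h
        nlinarith
      have hv : v ^ 2 = 1 := by
        have h := Real.sin_sq_add_cos_sq ((n : ℝ) * π)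
        rw [Real.sin_int_mul_pi] at h
        nlinarith
      have hst : s ^ 2 + t ^ 2 = 1 := Real.sin_sq_add_cos_sq _
      have hE2 : s * (2 * t + u + v) = 0 := by
        rw [hsin3, hsin23, hsin34] at E2; linear_combination E2
      clear_value s t u v
      by_cases hs0 : s = 0
      · rw [hs_def] at hs0
        obtain ⟨j, hj⟩ := Real.sin_eq_zero_iff.mp hs0
        have hq3 : AngleEq q₃ 0 := ⟨j, by rw [show q₃ = 2 * (q₃ / 2) by ring, ← hj]; ring⟩
        have e2 : q₂ = (m : ℝ) * π - (j : ℝ) * π := by linarith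
        have e4 : q₄ = (n : ℝ) * π - (j : ℝ) * π := by linarith
        have hq2 : AngleEq q₂ 0 ∨ AngleEq q₂ π := by
          rcases Int.even_or_odd (m - j) with ⟨i, hi⟩ | ⟨i, hi⟩
          · refine Or.inl ⟨i, ?_⟩
            have hm2 : (m : ℝ) = (j : ℝ) + 2 * (i : ℝ) := by
              have h' : m = j + 2 * i := by omega
              exact_mod_cast congrArg (Int.cast : ℤ → ℝ) h'
            rw [e2, hm2]; ring
          · refine Or.inr ⟨i, ?_⟩
            have hm2 : (m : ℝ) = (j : ℝ) + 2 * (i : ℝ) + 1 := by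
              have h' : m = j + 2 * i + 1 := by omega
              exact_mod_cast congrArg (Int.cast : ℤ → ℝ) h'
            rw [e2, hm2]; ring
        have hq4 : AngleEq q₄ 0 ∨ AngleEq q₄ π := by
          rcases Int.even_or_odd (n - j) with ⟨i, hi⟩ | ⟨i, hi⟩
          · refine Or.inl ⟨i, ?_⟩
            have hm2 : (n : ℝ) = (j : ℝ) + 2 * (i : ℝ) := by
              have h' : n = j + 2 * i := by omega
              exact_mod_cast congrArg (Int.cast : ℤ → ℝ) h'
            rw [e4, hm2]; ring
          · refine Or.inr ⟨i, ?_⟩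
            have hm2 : (n : ℝ) = (j : ℝ) + 2 * (i : ℝ) + 1 := by
              have h' : n = j + 2 * i + 1 := by omega
              exact_mod_cast congrArg (Int.cast : ℤ → ℝ) h'
            rw [e4, hm2]; ring
        rcases hq2 with hq2 | hq2 <;> rcases hq4 with hq4 | hq4
        · exact Or.inl ⟨hq2, hq3, hq4⟩
        · exact Or.inr (Or.inl ⟨hq2, hq3, hq4⟩)
        · exact Or.inr (Or.inr (Or.inl ⟨hq2, hq3, hq4⟩))
        · exact Or.inr (Or.inr (Or.inr (Or.inl ⟨hq2, hq3, hq4⟩)))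
      · exfalso
        have h2t : 2 * t + u + v = 0 := (mul_eq_zero.mp hE2).resolve_left hs0
        have hu' : u = 1 ∨ u = -1 := by
          have h' : (u - 1) * (u + 1) = 0 := by linear_combination hu
          rcases mul_eq_zero.mp h' with h | h
          · exact Or.inl (by linarith)
          · exact Or.inr (by linarith)
        have hv' : v = 1 ∨ v = -1 := by
          have h' : (v - 1) * (v + 1) = 0 := by linear_combination hv
          rcases mul_eq_zero.mp h' with h | h
          · exact Or.inl (by linarith)
          · exact Or.inr (by linarith)
        rcases hu' with hu' | hu' <;> rcases hv' with hv' | hv'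
        · exact hs0 (sq_eq_zero_iff.mp (by nlinarith [hst, h2t]))
        · exact hB (by linarith)
        · exact hB (by linarith)
        · exact hs0 (sq_eq_zero_iff.mp (by nlinarith [hst, h2t]))
  · rintro (⟨⟨k, hk⟩, ⟨l, hl⟩, ⟨m, hm⟩⟩ | ⟨⟨k, hk⟩, ⟨l, hl⟩, ⟨m, hm⟩⟩ |
      ⟨⟨k, hk⟩, ⟨l, hl⟩, ⟨m, hm⟩⟩ | ⟨⟨k, hk⟩, ⟨l, hl⟩, ⟨m, hm⟩⟩ |
      ⟨⟨l, hl⟩, ⟨m, hm⟩⟩ | ⟨⟨l, hl⟩, ⟨m, hm⟩⟩) <;>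
    refine ⟨?_, ?_, ?_⟩ <;>
    · first
      | (simp only [hm, hl, hk]) | (simp only [hm, hl])
      simp [Real.sin_add, Real.cos_add, Real.sin_sub, Real.cos_sub, Real.sin_neg,
        Real.cos_neg, sin2pi, cos2pi]

theorem stmt3 (f : ℝ → ℝ → ℝ → ℝ)
    (hf : ∀ q₂ q₃ q₄, f q₂ q₃ q₄ =
      Real.cos q₂ + Real.cos q₃ + Real.cos q₄ + Real.cos (q₂ + q₃) +
        Real.cos (q₃ + q₄))
    (q₂ q₃ q₄ : ℝ) :
    (deriv (fun x => f x q₃ q₄) q₂ = 0 ∧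
     deriv (fun y => f q₂ y q₄) q₃ = 0 ∧
     deriv (fun z => f q₂ q₃ z) q₄ = 0) ↔
    ((AngleEq q₂ 0 ∧ AngleEq q₃ 0 ∧ AngleEq q₄ 0) ∨
     (AngleEq q₂ 0 ∧ AngleEq q₃ 0 ∧ AngleEq q₄ π) ∨
     (AngleEq q₂ π ∧ AngleEq q₃ 0 ∧ AngleEq q₄ 0) ∨
     (AngleEq q₂ π ∧ AngleEq q₃ 0 ∧ AngleEq q₄ π) ∨
     (AngleEq q₃ π ∧ AngleEq q₄ (q₂ - π)) ∨
     (AngleEq q₃ π ∧ AngleEq q₄ (-q₂))) := by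
  have d1 : deriv (fun x => f x q₃ q₄) q₂ = -(sin q₂ + sin (q₂ + q₃)) := by
    have hfun : (fun x => f x q₃ q₄) =
        fun x => cos x + cos q₃ + cos q₄ + cos (x + q₃) + cos (q₃ + q₄) :=
      funext fun x => hf x q₃ q₄
    rw [hfun]
    have h2 : HasDerivAt (fun x : ℝ => cos (x + q₃)) (-sin (q₂ + q₃)) q₂ := by
      simpa [Function.comp_def] using (Real.hasDerivAt_cos (q₂ + q₃)).comp q₂ ((hasDerivAt_id q₂).add_const q₃)
    have h : HasDerivAt (fun x => cos x + cos q₃ + cos q₄ + cos (x + q₃) + cos (q₃ + q₄))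
        (-(sin q₂ + sin (q₂ + q₃))) q₂ := by
      have := ((((Real.hasDerivAt_cos q₂).add_const (cos q₃)).add_const (cos q₄)).add
        h2).add_const (cos (q₃ + q₄))
      refine this.congr_deriv ?_
      ring
    exact h.deriv
  have d2 : deriv (fun y => f q₂ y q₄) q₃ = -(sin q₃ + sin (q₂ + q₃) + sin (q₃ + q₄)) := by
    have hfun : (fun y => f q₂ y q₄) =
        fun y => cos q₂ + cos y + cos q₄ + cos (q₂ + y) + cos (y + q₄) :=
      funext fun y => hf q₂ y q₄
    rw [hfun]
    have h2 : HasDerivAt (fun y : ℝ => cos (q₂ + y)) (-sin (q₂ + q₃)) q₃ := by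
      simpa [Function.comp_def] using (Real.hasDerivAt_cos (q₂ + q₃)).comp q₃ ((hasDerivAt_id q₃).const_add q₂)
    have h3 : HasDerivAt (fun y : ℝ => cos (y + q₄)) (-sin (q₃ + q₄)) q₃ := by
      simpa [Function.comp_def] using (Real.hasDerivAt_cos (q₃ + q₄)).comp q₃ ((hasDerivAt_id q₃).add_const q₄)
    have h : HasDerivAt (fun y => cos q₂ + cos y + cos q₄ + cos (q₂ + y) + cos (y + q₄))
        (-(sin q₃ + sin (q₂ + q₃) + sin (q₃ + q₄))) q₃ := by
      have := ((((Real.hasDerivAt_cos q₃).const_add (cos q₂)).add_const (cos q₄)).add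
        h2).add h3
      refine this.congr_deriv ?_
      ring
    exact h.deriv
  have d3 : deriv (fun z => f q₂ q₃ z) q₄ = -(sin q₄ + sin (q₃ + q₄)) := by
    have hfun : (fun z => f q₂ q₃ z) =
        fun z => cos q₂ + cos q₃ + cos z + cos (q₂ + q₃) + cos (q₃ + z) :=
      funext fun z => hf q₂ q₃ z
    rw [hfun]
    have h2 : HasDerivAt (fun z : ℝ => cos (q₃ + z)) (-sin (q₃ + q₄)) q₄ := by
      simpa [Function.comp_def] using (Real.hasDerivAt_cos (q₃ + q₄)).comp q₄ ((hasDerivAt_id q₄).const_add q₃)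
    have h : HasDerivAt (fun z => cos q₂ + cos q₃ + cos z + cos (q₂ + q₃) + cos (q₃ + z))
        (-(sin q₄ + sin (q₃ + q₄))) q₄ := by
      have := ((((Real.hasDerivAt_cos q₄).const_add (cos q₂ + cos q₃)).add_const
        (cos (q₂ + q₃))).add h2)
      refine this.congr_deriv ?_
      ring
    exact h.deriv
  rw [d1, d2, d3, neg_eq_zero, neg_eq_zero, neg_eq_zero]
  exact crit_iff q₂ q₃ q₄
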